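/- arXiv:2305.03128 — 4 statements merged into one kernel-verified Lean document; each statement's English description precedes it below -/
import Mathlib

section
/- Let φ : ℝ → ℝ be differentiable. Then u(x,t) = tan( arctan(φ(x e^{-t})) + x(1 − e^{-t}) + t³/3 ) satisfies ∂u/∂t + x·∂u/∂x = (u² + 1)(x + t²) at every point (x,t) where the argument of tan avoids π/2 + kπ, and u(x,0) = φ(x). -/
open Real

theorem stmt_2 (φ : ℝ → ℝ) (hφ : Differentiable ℝ φ)
    (u : ℝ × ℝ → ℝ)
    (hu : ∀ x t : ℝ, u (x, t) =
      Real.tan (Real.arctan (φ (x * Real.exp (-t))) + x * (1 - Real.exp (-t)) + t ^ 3 / 3)) :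
    (∀ x t : ℝ,
      Real.cos (Real.arctan (φ (x * Real.exp (-t))) + x * (1 - Real.exp (-t)) + t ^ 3 / 3) ≠ 0 →
      deriv (fun τ => u (x, τ)) t + x * deriv (fun y => u (y, t)) x
        = ((u (x, t)) ^ 2 + 1) * (x + t ^ 2))
    ∧ (∀ x : ℝ, u (x, 0) = φ x) := by
  constructor
  · intro x t hcos
    simp only [hu]
    set A : ℝ := Real.arctan (φ (x * Real.exp (-t))) + x * (1 - Real.exp (-t)) + t ^ 3 / 3 with hA
    set p : ℝ := φ (x * Real.exp (-t)) with hp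
    set d : ℝ := deriv φ (x * Real.exp (-t)) with hd
    -- derivative in t
    have hinner_t : HasDerivAt (fun τ : ℝ => x * Real.exp (-τ)) (x * -Real.exp (-t)) t := by
      have := ((Real.hasDerivAt_exp (-t)).comp t (hasDerivAt_neg t)).const_mul x
      simpa using this
    have hphi_t : HasDerivAt (fun τ : ℝ => φ (x * Real.exp (-τ)))
        (d * (x * -Real.exp (-t))) t :=
      (hφ.differentiableAt.hasDerivAt).comp t hinner_t
    have harc_t : HasDerivAt (fun τ : ℝ => Real.arctan (φ (x * Real.exp (-τ))))
        (1 / (1 + p ^ 2) * (d * (x * -Real.exp (-t)))) t := hphi_t.arctan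
    have hmid_t : HasDerivAt (fun τ : ℝ => x * (1 - Real.exp (-τ))) (x * Real.exp (-t)) t := by
      have := ((hasDerivAt_const t (1:ℝ)).sub
        ((Real.hasDerivAt_exp (-t)).comp t (hasDerivAt_neg t))).const_mul x
      simpa using this
    have hcube_t : HasDerivAt (fun τ : ℝ => τ ^ 3 / 3) (t ^ 2) t := by
      have := (hasDerivAt_pow 3 t).div_const 3
      refine this.congr_deriv ?_
      norm_num
    have hAt : HasDerivAt (fun τ : ℝ => Real.arctan (φ (x * Real.exp (-τ)))
        + x * (1 - Real.exp (-τ)) + τ ^ 3 / 3)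
        (1 / (1 + p ^ 2) * (d * (x * -Real.exp (-t))) + x * Real.exp (-t) + t ^ 2) t :=
      (harc_t.add hmid_t).add hcube_t
    have hut : HasDerivAt (fun τ : ℝ => Real.tan (Real.arctan (φ (x * Real.exp (-τ)))
        + x * (1 - Real.exp (-τ)) + τ ^ 3 / 3))
        ((1 / Real.cos A ^ 2) * (1 / (1 + p ^ 2) * (d * (x * -Real.exp (-t)))
          + x * Real.exp (-t) + t ^ 2)) t := by
      have := (Real.hasDerivAt_tan hcos).comp t hAt
      simpa [Function.comp_def, mul_comm] using this
    -- derivative in x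
    have hinner_x : HasDerivAt (fun y : ℝ => y * Real.exp (-t)) (Real.exp (-t)) x := by
      simpa using (hasDerivAt_id x).mul_const (Real.exp (-t))
    have hphi_x : HasDerivAt (fun y : ℝ => φ (y * Real.exp (-t))) (d * Real.exp (-t)) x :=
      (hφ.differentiableAt.hasDerivAt).comp x hinner_x
    have harc_x : HasDerivAt (fun y : ℝ => Real.arctan (φ (y * Real.exp (-t))))
        (1 / (1 + p ^ 2) * (d * Real.exp (-t))) x := hphi_x.arctan
    have hmid_x : HasDerivAt (fun y : ℝ => y * (1 - Real.exp (-t))) (1 - Real.exp (-t)) x := by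
      simpa using (hasDerivAt_id x).mul_const (1 - Real.exp (-t))
    have hAx : HasDerivAt (fun y : ℝ => Real.arctan (φ (y * Real.exp (-t)))
        + y * (1 - Real.exp (-t)) + t ^ 3 / 3)
        (1 / (1 + p ^ 2) * (d * Real.exp (-t)) + (1 - Real.exp (-t)) + 0) x :=
      (harc_x.add hmid_x).add (hasDerivAt_const x _)
    have hux : HasDerivAt (fun y : ℝ => Real.tan (Real.arctan (φ (y * Real.exp (-t)))
        + y * (1 - Real.exp (-t)) + t ^ 3 / 3))
        ((1 / Real.cos A ^ 2) * (1 / (1 + p ^ 2) * (d * Real.exp (-t))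
          + (1 - Real.exp (-t)) + 0)) x := by
      have := (Real.hasDerivAt_tan hcos).comp x hAx
      simpa [Function.comp_def, mul_comm] using this
    rw [hut.deriv, hux.deriv]
    have htan : Real.tan A ^ 2 + 1 = 1 / Real.cos A ^ 2 := by
      rw [Real.tan_eq_sin_div_cos]
      field_simp
      exact Real.sin_sq_add_cos_sq A
    rw [htan]
    have hden : (1 : ℝ) + p ^ 2 ≠ 0 := by positivity
    field_simp
    ring
  · intro x
    rw [hu x 0]
    simp [Real.tan_arctan]
end

section
/- Let φ : ℝ → ℝ be differentiable and nonvanishing. Define F(x,t) = −1 + e^{-t²/2} − (x − t) e^{-t²/2} ∫₀ᵗ e^{s²/2} ds + e^{-t²/2}/φ(x − t). Then u = F⁻¹ satisfies the Bernoulli-type PDE ∂u/∂t + ∂u/∂x = t·u + x·u² at all points (x,t) with F(x,t) ≠ 0, and u(x,0) = φ(x). -/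
open Real

private lemma stmt_4_aux (x t E K J P Q G : ℝ) (hEK : E * K = 1) (hP : P ≠ 0)
    (hG : G = -1 + E - (x - t) * E * J + E / P) (hG0 : G ≠ 0) :
    -(-t * E - ((-1 * E + (x - t) * (-t * E)) * J + (x - t) * E * K)
        + (-t * E * P - E * (Q * -1)) / P ^ 2) / G ^ 2
      + -(-(E * J) + (0 * P - E * (Q * 1)) / P ^ 2) / G ^ 2
      = t * G⁻¹ + x * G⁻¹ ^ 2 := by
  have key : (-t * E - ((-1 * E + (x - t) * (-t * E)) * J + (x - t) * E * K)
        + (-t * E * P - E * (Q * -1)) / P ^ 2)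
      + (-(E * J) + (0 * P - E * (Q * 1)) / P ^ 2) = -t * G - x := by
    rw [hG]
    have h2 : (x - t) * E * K = x - t := by rw [mul_assoc, hEK, mul_one]
    rw [h2]
    field_simp
    ring
  have h3 : ∀ A B : ℝ, A + B = -t * G - x →
      -A / G ^ 2 + -B / G ^ 2 = t * G⁻¹ + x * G⁻¹ ^ 2 := by
    intro A B hAB
    have h4 : -A + -B = t * G + x := by linarith
    rw [← add_div, h4]
    field_simp
  exact h3 _ _ key

theorem stmt_4 (φ : ℝ → ℝ) (hφ : Differentiable ℝ φ) (hφ0 : ∀ y, φ y ≠ 0)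
    (F : ℝ × ℝ → ℝ)
    (hF : ∀ x t : ℝ, F (x, t) =
      -1 + Real.exp (-t ^ 2 / 2)
        - (x - t) * Real.exp (-t ^ 2 / 2) * (∫ s in (0 : ℝ)..t, Real.exp (s ^ 2 / 2))
        + Real.exp (-t ^ 2 / 2) / φ (x - t))
    (u : ℝ × ℝ → ℝ) (hu : ∀ x t : ℝ, u (x, t) = (F (x, t))⁻¹) :
    (∀ x t : ℝ, F (x, t) ≠ 0 →
      deriv (fun τ => u (x, τ)) t + deriv (fun y => u (y, t)) x
        = t * u (x, t) + x * (u (x, t)) ^ 2)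
    ∧ (∀ x : ℝ, u (x, 0) = φ x) := by
  -- notation
  set G : ℝ → ℝ → ℝ := fun x t =>
      -1 + Real.exp (-t ^ 2 / 2)
        - (x - t) * Real.exp (-t ^ 2 / 2) * (∫ s in (0 : ℝ)..t, Real.exp (s ^ 2 / 2))
        + Real.exp (-t ^ 2 / 2) / φ (x - t) with hG
  have hcont : Continuous fun s : ℝ => Real.exp (s ^ 2 / 2) := by continuity
  have hI : ∀ t : ℝ, HasDerivAt (fun τ => ∫ s in (0 : ℝ)..τ, Real.exp (s ^ 2 / 2))
      (Real.exp (t ^ 2 / 2)) t := fun t =>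
    (hcont.integral_hasStrictDerivAt 0 t).hasDerivAt
  have hE : ∀ t : ℝ, HasDerivAt (fun τ : ℝ => Real.exp (-τ ^ 2 / 2))
      (-t * Real.exp (-t ^ 2 / 2)) t := by
    intro t
    have h1 : HasDerivAt (fun τ : ℝ => -τ ^ 2 / 2) (-t) t := by
      have := ((hasDerivAt_pow 2 t).neg).div_const 2
      refine this.congr_deriv ?_
      ring
    have := h1.exp
    convert this using 1
    ring
  constructor
  · intro x t hF0
    rw [hF] at hF0
    -- derivative in t
    have hφc : ∀ t : ℝ, HasDerivAt (fun τ : ℝ => φ (x - τ)) (deriv φ (x - t) * (-1)) t := by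
      intro t
      exact (hφ (x - t)).hasDerivAt.comp t ((hasDerivAt_id t).const_sub x)
    have hprod : HasDerivAt (fun τ : ℝ => (x - τ) * Real.exp (-τ ^ 2 / 2))
        ((-1) * Real.exp (-t ^ 2 / 2) + (x - t) * (-t * Real.exp (-t ^ 2 / 2))) t :=
      (((hasDerivAt_id t).const_sub x)).mul (hE t)
    have hb : HasDerivAt
        (fun τ : ℝ => (x - τ) * Real.exp (-τ ^ 2 / 2) * (∫ s in (0 : ℝ)..τ, Real.exp (s ^ 2 / 2)))
        (((-1) * Real.exp (-t ^ 2 / 2) + (x - t) * (-t * Real.exp (-t ^ 2 / 2)))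
            * (∫ s in (0 : ℝ)..t, Real.exp (s ^ 2 / 2))
          + (x - t) * Real.exp (-t ^ 2 / 2) * Real.exp (t ^ 2 / 2)) t :=
      hprod.mul (hI t)
    have hc : HasDerivAt (fun τ : ℝ => Real.exp (-τ ^ 2 / 2) / φ (x - τ))
        (((-t * Real.exp (-t ^ 2 / 2)) * φ (x - t)
          - Real.exp (-t ^ 2 / 2) * (deriv φ (x - t) * (-1))) / (φ (x - t)) ^ 2) t :=
      (hE t).div (hφc t) (hφ0 _)
    have hFt : HasDerivAt (fun τ => G x τ)
        ((-t * Real.exp (-t ^ 2 / 2))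
          - (((-1) * Real.exp (-t ^ 2 / 2) + (x - t) * (-t * Real.exp (-t ^ 2 / 2)))
              * (∫ s in (0 : ℝ)..t, Real.exp (s ^ 2 / 2))
            + (x - t) * Real.exp (-t ^ 2 / 2) * Real.exp (t ^ 2 / 2))
          + ((-t * Real.exp (-t ^ 2 / 2)) * φ (x - t)
              - Real.exp (-t ^ 2 / 2) * (deriv φ (x - t) * (-1))) / (φ (x - t)) ^ 2) t :=
      (((hE t).const_add (-1)).sub hb).add hc
    -- derivative in x
    have hφcx : HasDerivAt (fun y : ℝ => φ (y - t)) (deriv φ (x - t) * 1) x :=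
      (hφ (x - t)).hasDerivAt.comp x ((hasDerivAt_id x).sub_const t)
    have hbx : HasDerivAt
        (fun y : ℝ => (y - t) * Real.exp (-t ^ 2 / 2) * (∫ s in (0 : ℝ)..t, Real.exp (s ^ 2 / 2)))
        (Real.exp (-t ^ 2 / 2) * (∫ s in (0 : ℝ)..t, Real.exp (s ^ 2 / 2))) x := by
      have := (((hasDerivAt_id x).sub_const t).mul_const (Real.exp (-t ^ 2 / 2))).mul_const
        (∫ s in (0 : ℝ)..t, Real.exp (s ^ 2 / 2))
      refine this.congr_deriv ?_
      ring
    have hcx : HasDerivAt (fun y : ℝ => Real.exp (-t ^ 2 / 2) / φ (y - t))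
        ((0 * φ (x - t) - Real.exp (-t ^ 2 / 2) * (deriv φ (x - t) * 1)) / (φ (x - t)) ^ 2) x :=
      (hasDerivAt_const x _).div hφcx (hφ0 _)
    have hFx : HasDerivAt (fun y => G y t)
        (-(Real.exp (-t ^ 2 / 2) * (∫ s in (0 : ℝ)..t, Real.exp (s ^ 2 / 2)))
          + (0 * φ (x - t) - Real.exp (-t ^ 2 / 2) * (deriv φ (x - t) * 1)) / (φ (x - t)) ^ 2) x := by
      have h0 : HasDerivAt (fun y : ℝ => -1 + Real.exp (-t ^ 2 / 2)) 0 x := hasDerivAt_const x _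
      have := (h0.sub hbx).add hcx
      refine this.congr_deriv ?_
      ring
    -- rewrite the u-functions
    have e1 : (fun τ => u (x, τ)) = fun τ => (G x τ)⁻¹ := by
      funext τ; rw [hu, hF]
    have e2 : (fun y => u (y, t)) = fun y => (G y t)⁻¹ := by
      funext y; rw [hu, hF]
    have hGne : G x t ≠ 0 := hF0
    have d1 : deriv (fun τ => u (x, τ)) t = -(
        (-t * Real.exp (-t ^ 2 / 2))
          - (((-1) * Real.exp (-t ^ 2 / 2) + (x - t) * (-t * Real.exp (-t ^ 2 / 2)))
              * (∫ s in (0 : ℝ)..t, Real.exp (s ^ 2 / 2))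
            + (x - t) * Real.exp (-t ^ 2 / 2) * Real.exp (t ^ 2 / 2))
          + ((-t * Real.exp (-t ^ 2 / 2)) * φ (x - t)
              - Real.exp (-t ^ 2 / 2) * (deriv φ (x - t) * (-1))) / (φ (x - t)) ^ 2) / (G x t) ^ 2 := by
      rw [e1]; exact (hFt.inv hGne).deriv
    have d2 : deriv (fun y => u (y, t)) x = -(
        -(Real.exp (-t ^ 2 / 2) * (∫ s in (0 : ℝ)..t, Real.exp (s ^ 2 / 2)))
          + (0 * φ (x - t) - Real.exp (-t ^ 2 / 2) * (deriv φ (x - t) * 1)) / (φ (x - t)) ^ 2) / (G x t) ^ 2 := by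
      rw [e2]; exact (hFx.inv hGne).deriv
    have hEI : Real.exp (-t ^ 2 / 2) * Real.exp (t ^ 2 / 2) = 1 := by
      rw [← Real.exp_add, show -t ^ 2 / 2 + t ^ 2 / 2 = 0 by ring, Real.exp_zero]
    rw [d1, d2, hu x t, hF x t]
    exact stmt_4_aux x t (Real.exp (-t ^ 2 / 2)) (Real.exp (t ^ 2 / 2))
      (∫ s in (0 : ℝ)..t, Real.exp (s ^ 2 / 2)) (φ (x - t)) (deriv φ (x - t)) (G x t)
      hEI (hφ0 _) rfl hGne
  · intro x
    rw [hu, hF]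
    simp [intervalIntegral.integral_same, Real.exp_zero, hφ0 x]
end

section
/- Let φ : ℝ → ℝ be differentiable and nonvanishing. Define F(x,t) = −e^{-t²/2 − t}·x·∫₀ᵗ e^{s + s²/2} ds + (e^{-t²/2} − 1) + e^{-t²/2}/φ(x e^{-t}). Then u = F⁻¹ satisfies ∂u/∂t + x·∂u/∂x = t·u + (x + t)·u² at all points where F(x,t) ≠ 0, with u(x,0) = φ(x). -/
set_option maxHeartbeats 1000000 in
theorem stmt_5 (φ : ℝ → ℝ) (hφ : Differentiable ℝ φ) (hφ0 : ∀ y, φ y ≠ 0)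
    (F : ℝ × ℝ → ℝ)
    (hF : ∀ x t : ℝ, F (x, t) =
      -(Real.exp (-t ^ 2 / 2 - t)) * x * (∫ s in (0 : ℝ)..t, Real.exp (s + s ^ 2 / 2))
        + (Real.exp (-t ^ 2 / 2) - 1)
        + Real.exp (-t ^ 2 / 2) / φ (x * Real.exp (-t)))
    (u : ℝ × ℝ → ℝ) (hu : ∀ x t : ℝ, u (x, t) = (F (x, t))⁻¹) :
    (∀ x t : ℝ, F (x, t) ≠ 0 →
      deriv (fun τ => u (x, τ)) t + x * deriv (fun y => u (y, t)) x
        = t * u (x, t) + (x + t) * (u (x, t)) ^ 2)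
    ∧ (∀ x : ℝ, u (x, 0) = φ x) := by
  constructor
  · intro x t hF0
    have hc : Continuous (fun s : ℝ => Real.exp (s + s^2/2)) := by fun_prop
    -- derivative of the integral
    have hI : HasDerivAt (fun τ : ℝ => ∫ s in (0:ℝ)..τ, Real.exp (s + s^2/2))
        (Real.exp (t + t^2/2)) t :=
      intervalIntegral.integral_hasDerivAt_right (hc.intervalIntegrable _ _)
        (hc.stronglyMeasurableAtFilter _ _) hc.continuousAt
    have hinner : HasDerivAt (fun τ : ℝ => -τ^2/2 - τ) (-t - 1) t := by
      have := ((hasDerivAt_pow 2 t).neg.div_const 2).sub (hasDerivAt_id t)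
      exact this.congr_deriv (by ring)
    have ha : HasDerivAt (fun τ : ℝ => Real.exp (-τ^2/2 - τ))
        (Real.exp (-t^2/2 - t) * (-t - 1)) t := hinner.exp
    have hinner2 : HasDerivAt (fun τ : ℝ => -τ^2/2) (-t) t := by
      have := (hasDerivAt_pow 2 t).neg.div_const 2
      exact this.congr_deriv (by ring)
    have hb : HasDerivAt (fun τ : ℝ => Real.exp (-τ^2/2))
        (Real.exp (-t^2/2) * (-t)) t := hinner2.exp
    have hy : HasDerivAt (fun τ : ℝ => x * Real.exp (-τ))
        (x * (Real.exp (-t) * (-1))) t := ((hasDerivAt_neg t).exp).const_mul x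
    have hφy : HasDerivAt φ (deriv φ (x * Real.exp (-t))) (x * Real.exp (-t)) :=
      (hφ _).hasDerivAt
    have hφc : HasDerivAt (fun τ : ℝ => φ (x * Real.exp (-τ)))
        (deriv φ (x * Real.exp (-t)) * (x * (Real.exp (-t) * (-1)))) t :=
      hφy.comp t hy
    have hGt := ((((ha.neg.mul_const x).mul hI).add (hb.sub_const 1)).add
      (hb.div hφc (hφ0 _)))
    -- derivative in x
    have hax : HasDerivAt (fun ξ : ℝ => -(Real.exp (-t^2/2 - t)) * ξ *
        (∫ s in (0:ℝ)..t, Real.exp (s + s^2/2)))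
        (-(Real.exp (-t^2/2 - t)) * (∫ s in (0:ℝ)..t, Real.exp (s + s^2/2))) x := by
      have := ((hasDerivAt_id x).const_mul (-(Real.exp (-t^2/2 - t)))).mul_const
        (∫ s in (0:ℝ)..t, Real.exp (s + s^2/2))
      simpa using this
    have hyx : HasDerivAt (fun ξ : ℝ => ξ * Real.exp (-t)) (Real.exp (-t)) x := by
      simpa using (hasDerivAt_id x).mul_const (Real.exp (-t))
    have hφcx : HasDerivAt (fun ξ : ℝ => φ (ξ * Real.exp (-t)))
        (deriv φ (x * Real.exp (-t)) * Real.exp (-t)) x :=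
      ((hφ _).hasDerivAt).comp x hyx
    have hGx := (hax.add (hasDerivAt_const x (Real.exp (-t^2/2) - 1))).add
      ((hasDerivAt_const x (Real.exp (-t^2/2))).div hφcx (hφ0 _))
    -- rewrite u as inverse of the explicit expression
    have hF0' : (-(Real.exp (-t^2/2 - t)) * x * (∫ s in (0:ℝ)..t, Real.exp (s + s^2/2))
        + (Real.exp (-t^2/2) - 1)
        + Real.exp (-t^2/2) / φ (x * Real.exp (-t))) ≠ 0 := by
      rw [hF] at hF0; convert hF0 using 3 <;> ring_nf
    have hueqt : (fun τ => u (x, τ)) = fun τ =>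
        (-(Real.exp (-τ^2/2 - τ)) * x * (∫ s in (0:ℝ)..τ, Real.exp (s + s^2/2))
        + (Real.exp (-τ^2/2) - 1)
        + Real.exp (-τ^2/2) / φ (x * Real.exp (-τ)))⁻¹ := by
      funext τ; rw [hu, hF]
    have hueqx : (fun ξ => u (ξ, t)) = fun ξ =>
        (-(Real.exp (-t^2/2 - t)) * ξ * (∫ s in (0:ℝ)..t, Real.exp (s + s^2/2))
        + (Real.exp (-t^2/2) - 1)
        + Real.exp (-t^2/2) / φ (ξ * Real.exp (-t)))⁻¹ := by
      funext ξ; rw [hu, hF]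
    erw [hueqt, hueqx, (hGt.inv hF0').deriv, (hGx.inv hF0').deriv, hu, hF]
    simp only [Pi.add_apply, Pi.mul_apply, Pi.neg_apply, Pi.div_apply]
    -- now pure algebra
    have hE : Real.exp (-t^2/2 - t) = Real.exp (-t^2/2) * Real.exp (-t) := by
      rw [← Real.exp_add]; ring_nf
    have hE2 : Real.exp (t + t^2/2) = (Real.exp (-t^2/2) * Real.exp (-t))⁻¹ := by
      rw [← Real.exp_add, ← Real.exp_neg]; ring_nf
    rw [hE] at hF0' ⊢
    rw [hE2]
    set A := Real.exp (-t^2/2) with hA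
    set B := Real.exp (-t) with hB
    set P := φ (x * B) with hP
    set Q := deriv φ (x * B) with hQ
    set J := (∫ s in (0:ℝ)..t, Real.exp (s + s^2/2)) with hJ
    have h1 : A ≠ 0 := Real.exp_ne_zero _
    have h2 : B ≠ 0 := Real.exp_ne_zero _
    have h3 : P ≠ 0 := hφ0 _
    set D := -(A * B) * x * J + (A - 1) + A / P with hD
    have hD0 : D ≠ 0 := hF0'
    have hD2 : D ^ 2 ≠ 0 := pow_ne_zero _ hD0
    rw [show t * D⁻¹ + (x + t) * D⁻¹ ^ 2 = (t * D + (x + t)) / D ^ 2 by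
      field_simp]
    rw [← mul_div_assoc, ← add_div]
    congr 1
    rw [hD]
    field_simp
    ring
  · intro x
    rw [hu, hF]
    simp [hφ0 x]
end

section
/- Let u : ℝ × ℝ → ℝ be C¹ with u(x,t) > 0, b : ℝ → ℝ continuous, B an antiderivative of b, and suppose h(x,t) := u_t(x,t)·e^{B(u(x,t))} is C¹. If u_t(x,t) = (H(t) + K(u(x,t)))·e^{-B(u(x,t))} where H, K are C¹ with H'(t) = α(x(t),t) and K'(y) = G(y)·e^{B(y)}, and x'(t) = a(x(t),t), then u satisfies u_tt + a·u_xt + b(u)·u_t·(u_t + a·u_x) = α(x,t)·e^{-B(u)} + G(u)·(u_t + a·u_x) along the characteristic curve (x(t), t). -/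
set_option maxHeartbeats 1000000 in
theorem stmt_13 (a α : ℝ × ℝ → ℝ) (b G : ℝ → ℝ) (hb : Continuous b) (hG : Continuous G)
    (B : ℝ → ℝ) (hB : ∀ y : ℝ, HasDerivAt B (b y) y)
    (u : ℝ × ℝ → ℝ) (hu : ContDiff ℝ 1 u) (hpos : ∀ x t : ℝ, 0 < u (x, t))
    (hh : ContDiff ℝ 1
      (fun p : ℝ × ℝ => deriv (fun τ => u (p.1, τ)) p.2 * Real.exp (B (u p))))
    (x : ℝ → ℝ) (hx : ∀ t : ℝ, HasDerivAt x (a (x t, t)) t)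
    (H K : ℝ → ℝ) (hHC : ContDiff ℝ 1 H) (hKC : ContDiff ℝ 1 K)
    (hH' : ∀ t : ℝ, HasDerivAt H (α (x t, t)) t)
    (hK' : ∀ y : ℝ, HasDerivAt K (G y * Real.exp (B y)) y)
    (hansatz : ∀ t : ℝ,
      deriv (fun τ => u (x t, τ)) t
        = (H t + K (u (x t, t))) * Real.exp (-B (u (x t, t)))) :
    ∀ t : ℝ,
      deriv (fun τ => deriv (fun σ => u (x t, σ)) τ) t
        + a (x t, t) * deriv (fun y => deriv (fun τ => u (y, τ)) t) (x t)
        + b (u (x t, t)) * deriv (fun τ => u (x t, τ)) t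
          * (deriv (fun τ => u (x t, τ)) t
              + a (x t, t) * deriv (fun y => u (y, t)) (x t))
      = α (x t, t) * Real.exp (-B (u (x t, t)))
        + G (u (x t, t))
          * (deriv (fun τ => u (x t, τ)) t
              + a (x t, t) * deriv (fun y => u (y, t)) (x t)) := by
  intro t
  have hud : Differentiable ℝ u := hu.differentiable one_ne_zero
  set ut : ℝ × ℝ → ℝ := fun p => deriv (fun τ => u (p.1, τ)) p.2 with hut_def
  set h : ℝ × ℝ → ℝ := fun p => ut p * Real.exp (B (u p)) with hh_def
  have hhd : Differentiable ℝ h := hh.differentiable one_ne_zero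
  -- partial derivatives of u
  have hu_t : ∀ y s : ℝ, HasDerivAt (fun τ => u (y, τ)) (fderiv ℝ u (y, s) (0, 1)) s := by
    intro y s
    have hi : HasDerivAt (fun τ : ℝ => ((y, τ) : ℝ × ℝ)) ((0 : ℝ), (1 : ℝ)) s :=
      (hasDerivAt_const _ _).prodMk (hasDerivAt_id _)
    exact (hud (y, s)).hasFDerivAt.comp_hasDerivAt s hi
  have hu_x : ∀ y s : ℝ, HasDerivAt (fun z => u (z, s)) (fderiv ℝ u (y, s) (1, 0)) y := by
    intro y s
    have hi : HasDerivAt (fun z : ℝ => ((z, s) : ℝ × ℝ)) ((1 : ℝ), (0 : ℝ)) y :=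
      (hasDerivAt_id _).prodMk (hasDerivAt_const _ _)
    exact (hud (y, s)).hasFDerivAt.comp_hasDerivAt y hi
  have hut_eq : ∀ p : ℝ × ℝ, ut p = fderiv ℝ u p (0, 1) := by
    rintro ⟨y, s⟩
    exact (hu_t y s).deriv
  -- derivative of exp(-B∘u)
  have hE : ∀ p : ℝ × ℝ, HasFDerivAt (fun q => Real.exp (-B (u q)))
      ((Real.exp (-B (u p)) * -b (u p)) • fderiv ℝ u p) p := by
    intro p
    have h1 : HasFDerivAt (fun q => B (u q)) ((b (u p)) • fderiv ℝ u p) p :=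
      (hB (u p)).comp_hasFDerivAt p (hud p).hasFDerivAt
    have h3 := (Real.hasDerivAt_exp (-B (u p))).comp_hasFDerivAt p h1.neg
    have h4 : (Real.exp (-B (u p))) • -(b (u p) • fderiv ℝ u p)
        = (Real.exp (-B (u p)) * -b (u p)) • fderiv ℝ u p := by
      rw [smul_neg, smul_smul, mul_neg, ← neg_smul (R := ℝ) (M := (ℝ × ℝ) →L[ℝ] ℝ)]
    exact h4 ▸ h3
  -- ut = h * exp(-B∘u)
  have hut_hE : ut = fun q => h q * Real.exp (-B (u q)) := by
    funext q
    have hc : Real.exp (B (u q)) * Real.exp (-B (u q)) = 1 := by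
      rw [← Real.exp_add]; simp
    rw [hh_def]
    simp only []
    rw [mul_assoc, hc, mul_one]
  -- full derivative of ut
  have hutd : ∀ p : ℝ × ℝ, HasFDerivAt ut
      (Real.exp (-B (u p)) • fderiv ℝ h p
        + (h p * (Real.exp (-B (u p)) * -b (u p))) • fderiv ℝ u p) p := by
    intro p
    have hm : HasFDerivAt (fun q => h q * Real.exp (-B (u q))) _ p := (hhd p).hasFDerivAt.mul (hE p)
    rw [← hut_hE] at hm
    have h4 : h p • (Real.exp (-B (u p)) * -b (u p)) • fderiv ℝ u p
          + Real.exp (-B (u p)) • fderiv ℝ h p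
        = Real.exp (-B (u p)) • fderiv ℝ h p
          + (h p * (Real.exp (-B (u p)) * -b (u p))) • fderiv ℝ u p := by
      rw [smul_smul, add_comm]
    exact h4 ▸ hm
  set A : ℝ := a (x t, t) with hA_def
  set L := fderiv ℝ h (x t, t) with hL_def
  set M := fderiv ℝ u (x t, t) with hM_def
  -- chain rule along curve for h and u
  have hc : HasDerivAt (fun s : ℝ => ((x s, s) : ℝ × ℝ)) ((A, (1 : ℝ))) t :=
    (hx t).prodMk (hasDerivAt_id t)
  have hhc : HasDerivAt (fun s => h (x s, s)) (L (A, 1)) t :=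
    (hhd (x t, t)).hasFDerivAt.comp_hasDerivAt_of_eq t hc rfl
  have huc : HasDerivAt (fun s => u (x s, s)) (M (A, 1)) t :=
    (hud (x t, t)).hasFDerivAt.comp_hasDerivAt_of_eq t hc rfl
  -- h along curve equals H + K∘u
  have hFeq : (fun s => h (x s, s)) = fun s => H s + K (u (x s, s)) := by
    funext s
    have hc2 : Real.exp (-B (u (x s, s))) * Real.exp (B (u (x s, s))) = 1 := by
      rw [← Real.exp_add]; simp
    rw [hh_def]
    simp only []
    rw [hut_def]
    simp only []
    rw [hansatz s, mul_assoc, hc2, mul_one]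
  have hGc : HasDerivAt (fun s => H s + K (u (x s, s)))
      (α (x t, t) + G (u (x t, t)) * Real.exp (B (u (x t, t))) * M (A, 1)) t :=
    (hH' t).add ((hK' (u (x t, t))).comp t huc)
  have key : L (A, 1) = α (x t, t) + G (u (x t, t)) * Real.exp (B (u (x t, t))) * M (A, 1) := by
    have := hFeq ▸ hhc
    exact this.unique hGc
  -- decompose (A,1)
  have hdecomp : ((A, (1 : ℝ)) : ℝ × ℝ) = A • ((1 : ℝ), (0 : ℝ)) + ((0 : ℝ), (1 : ℝ)) := by
    simp [Prod.ext_iff]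
  have hLsplit : L (A, 1) = A * L (1, 0) + L (0, 1) := by
    rw [hdecomp, map_add, map_smul]; simp
  have hMsplit : M (A, 1) = A * M (1, 0) + M (0, 1) := by
    rw [hdecomp, map_add, map_smul]; simp
  -- identify the second derivatives in the goal
  have hutt : deriv (fun τ => deriv (fun σ => u (x t, σ)) τ) t
      = Real.exp (-B (u (x t, t))) * L (0, 1)
        + (h (x t, t) * (Real.exp (-B (u (x t, t))) * -b (u (x t, t)))) * M (0, 1) := by
    have hi : HasDerivAt (fun τ : ℝ => ((x t, τ) : ℝ × ℝ)) ((0 : ℝ), (1 : ℝ)) t :=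
      (hasDerivAt_const _ _).prodMk (hasDerivAt_id _)
    have hder : HasDerivAt (fun τ => ut (x t, τ))
        ((Real.exp (-B (u (x t, t))) • L
          + (h (x t, t) * (Real.exp (-B (u (x t, t))) * -b (u (x t, t)))) • M) (0, 1)) t :=
      (hutd (x t, t)).comp_hasDerivAt_of_eq _ hi rfl
    have h2 : (fun τ => deriv (fun σ => u (x t, σ)) τ) = fun τ => ut (x t, τ) := rfl
    rw [h2, hder.deriv]
    simp
  have hutx : deriv (fun y => deriv (fun τ => u (y, τ)) t) (x t)
      = Real.exp (-B (u (x t, t))) * L (1, 0)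
        + (h (x t, t) * (Real.exp (-B (u (x t, t))) * -b (u (x t, t)))) * M (1, 0) := by
    have hi : HasDerivAt (fun z : ℝ => ((z, t) : ℝ × ℝ)) ((1 : ℝ), (0 : ℝ)) (x t) :=
      (hasDerivAt_id _).prodMk (hasDerivAt_const _ _)
    have hder : HasDerivAt (fun y => ut (y, t))
        ((Real.exp (-B (u (x t, t))) • L
          + (h (x t, t) * (Real.exp (-B (u (x t, t))) * -b (u (x t, t)))) • M) (1, 0)) (x t) :=
      (hutd (x t, t)).comp_hasDerivAt_of_eq _ hi rfl
    have h2 : (fun y => deriv (fun τ => u (y, τ)) t) = fun y => ut (y, t) := rfl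
    rw [h2, hder.deriv]
    simp
  have hut1 : deriv (fun τ => u (x t, τ)) t = M (0, 1) := (hu_t (x t) t).deriv
  have hux1 : deriv (fun y => u (y, t)) (x t) = M (1, 0) := (hu_x (x t) t).deriv
  have hhP : h (x t, t) = M (0, 1) * Real.exp (B (u (x t, t))) := by
    rw [hh_def]
    simp only []
    rw [hut_eq (x t, t)]
  rw [hutt, hutx, hut1, hux1]
  have hEne : Real.exp (B (u (x t, t))) ≠ 0 := Real.exp_ne_zero _
  have hexpneg : Real.exp (-B (u (x t, t))) = (Real.exp (B (u (x t, t))))⁻¹ := Real.exp_neg _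
  rw [hhP, hexpneg]
  rw [hLsplit, hMsplit] at key
  field_simp
  nlinarith [key, sq_nonneg (Real.exp (B (u (x t, t))))]
end
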